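/- For every d ≥ 4, the Gaussian moment surface G_{1,d} ⊂ ℙ^d is not uniruled by lines; that is, it is not covered by a one-dimensional family of lines contained in it. -/
import Mathlib


noncomputable section

namespace ContactLoci

variable {K : Type*} [Field K] {ι : Type*} [Fintype ι]

/-- Projective space over `K` with homogeneous coordinates indexed by `ι`. -/
abbrev PP (K : Type*) [Field K] (ι : Type*) : Type _ :=
  Projectivization K (ι → K)

/-- The affine cone over a set of projective points. -/
def coneOf (S : Set (PP K ι)) : Set (ι → K) :=
  ⋃ x ∈ S, (x.submodule : Set (ι → K))

/-- The linear span, in the underlying vector space, of the cone over `S`. -/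
def vspan (S : Set (PP K ι)) : Submodule K (ι → K) :=
  Submodule.span K (coneOf S)

/-- The projective linear span of a set of projective points. -/
def projSpan (S : Set (PP K ι)) : Set (PP K ι) :=
  {x | x.submodule ≤ vspan S}

/-- The projective dimension of the linear span of `S` (`-1` for `S = ∅`). -/
def projDim (S : Set (PP K ι)) : ℤ :=
  (Module.finrank K (vspan S) : ℤ) - 1

/-- A set of projective points is non-degenerate if its linear span is everything. -/
def Nondegenerate (S : Set (PP K ι)) : Prop :=
  vspan S = ⊤

/-- The common zero locus in projective space of a set of polynomials. -/
def zeroLocus (S : Set (MvPolynomial ι K)) : Set (PP K ι) :=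
  {x | ∀ f ∈ S, ∀ v ∈ x.submodule, MvPolynomial.eval v f = 0}

/-- Zariski-closed subsets of projective space: common zero loci of sets of
homogeneous polynomials. -/
def IsZClosed (X : Set (PP K ι)) : Prop :=
  ∃ S : Set (MvPolynomial ι K), (∀ f ∈ S, ∃ d : ℕ, f.IsHomogeneous d) ∧ X = zeroLocus S

/-- Zariski closure. -/
def zclosure (S : Set (PP K ι)) : Set (PP K ι) :=
  ⋂₀ {Y | IsZClosed Y ∧ S ⊆ Y}

/-- Irreducibility with respect to the Zariski topology. -/
def IsZIrreducible (S : Set (PP K ι)) : Prop :=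
  S.Nonempty ∧ ∀ Y Z : Set (PP K ι), IsZClosed Y → IsZClosed Z → S ⊆ Y ∪ Z → S ⊆ Y ∨ S ⊆ Z

/-- An integral projective variety: a Zariski-closed irreducible subset. -/
def IsIntegralVariety (X : Set (PP K ι)) : Prop :=
  IsZClosed X ∧ IsZIrreducible X

/-- `C` is an irreducible component of `S`: a maximal irreducible subset of `S`. -/
def IsZIrredComponent (S C : Set (PP K ι)) : Prop :=
  IsZIrreducible C ∧ C ⊆ S ∧ ∀ D : Set (PP K ι), IsZIrreducible D → D ⊆ S → C ⊆ D → C = D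

/-- The dimension of a set: the Krull dimension of the poset of irreducible
Zariski-closed subsets of its Zariski closure (`⊥` for the empty set). -/
def zdim (S : Set (PP K ι)) : WithBot ℕ∞ :=
  Order.krullDim ({Y : Set (PP K ι) // IsZClosed Y ∧ IsZIrreducible Y ∧ Y ⊆ zclosure S})

/-- A property holds at a general point of `X`: it holds away from a proper
Zariski-closed subset. -/
def HoldsGenerically (X : Set (PP K ι)) (P : PP K ι → Prop) : Prop :=
  ∃ Y : Set (PP K ι), IsZClosed Y ∧ ¬X ⊆ Y ∧ ∀ x ∈ X \ Y, P x

/-- Zero locus of multihomogeneous polynomials in a self-product of projective space. -/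
def multiZeroLocus {m : ℕ} (S : Set (MvPolynomial (Fin m × ι) K)) :
    Set (Fin m → PP K ι) :=
  {u | ∀ f ∈ S, ∀ v : Fin m → ι → K, (∀ i, v i ∈ (u i).submodule) →
    MvPolynomial.eval (fun p => v p.1 p.2) f = 0}

/-- Zariski-closed subsets of the `m`-fold self-product of projective space. -/
def IsMultiZClosed {m : ℕ} (T : Set (Fin m → PP K ι)) : Prop :=
  ∃ S : Set (MvPolynomial (Fin m × ι) K),
    (∀ f ∈ S, ∀ i : Fin m, ∃ d : ℕ,
      MvPolynomial.IsWeightedHomogeneous (fun p : Fin m × ι => if p.1 = i then 1 else 0) f d) ∧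
    T = multiZeroLocus S

/-- A property holds for a general `m`-tuple of points of `X`. -/
def HoldsForGeneralTuples (X : Set (PP K ι)) (m : ℕ) (P : (Fin m → PP K ι) → Prop) : Prop :=
  ∃ T : Set (Fin m → PP K ι), IsMultiZClosed T ∧
    (∃ u : Fin m → PP K ι, (∀ i, u i ∈ X) ∧ u ∉ T) ∧
    ∀ u : Fin m → PP K ι, (∀ i, u i ∈ X) → u ∉ T → P u

/-- The homogeneous vanishing ideal of `X` (as a set of homogeneous polynomials). -/
def homogVanishingIdeal (X : Set (PP K ι)) : Set (MvPolynomial ι K) :=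
  {f | (∃ d : ℕ, f.IsHomogeneous d) ∧ ∀ x ∈ X, ∀ v ∈ x.submodule, MvPolynomial.eval v f = 0}

/-- The embedded (projective) tangent space of `X` at `x`. -/
def embTangentSpace (X : Set (PP K ι)) (x : PP K ι) : Set (PP K ι) :=
  {y | ∀ f ∈ homogVanishingIdeal X,
    ∑ i : ι, y.rep i * MvPolynomial.eval x.rep (MvPolynomial.pderiv i f) = 0}

/-- Smooth points of `X`. -/
def IsSmoothPoint (X : Set (PP K ι)) (x : PP K ι) : Prop :=
  x ∈ X ∧ zdim (embTangentSpace X x) = zdim X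

/-- `M_A`: the linear span of the tangent spaces of `X` at the points of `A`. -/
def tangentSpan (X A : Set (PP K ι)) : Set (PP K ι) :=
  projSpan (⋃ a ∈ A, embTangentSpace X a)

/-- The locus of smooth points of `X` at which `M_A` is tangent to `X`. -/
def tangencyLocus (X A : Set (PP K ι)) : Set (PP K ι) :=
  {x | IsSmoothPoint X x ∧ embTangentSpace X x ⊆ tangentSpan X A}

/-- The tangential contact locus of `X` at `A`: the closure of the union of the
irreducible components of the tangency locus meeting `A`. -/
def contactLocus (X A : Set (PP K ι)) : Set (PP K ι) :=
  zclosure (⋃ C ∈ {C : Set (PP K ι) |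
    IsZIrredComponent (tangencyLocus X A) C ∧ (C ∩ A).Nonempty}, C)

/-- `X` is weakly `k`-defective: the tangential contact locus at `k` general points
has positive dimension. -/
def WeaklyDefective (X : Set (PP K ι)) (k : ℕ) : Prop :=
  HoldsForGeneralTuples X k fun u => 0 < zdim (contactLocus X (Set.range u))

/-- The `k`-th secant variety of `X`. -/
def secant (k : ℕ) (X : Set (PP K ι)) : Set (PP K ι) :=
  zclosure {q | ∃ S : Finset (PP K ι), ↑S ⊆ X ∧ S.card = k ∧ q ∈ projSpan (S : Set (PP K ι))}

/-- The `X`-rank of a point. -/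
def xrank (X : Set (PP K ι)) (q : PP K ι) : ℕ :=
  sInf {k | ∃ S : Finset (PP K ι), ↑S ⊆ X ∧ S.card = k ∧ q ∈ projSpan (S : Set (PP K ι))}

/-- `𝒮(q,X)`: the set of minimal `X`-decompositions of `q`. -/
def decompositions (X : Set (PP K ι)) (q : PP K ι) : Set (Finset (PP K ι)) :=
  {S | ↑S ⊆ X ∧ S.card = xrank X q ∧ q ∈ projSpan (S : Set (PP K ι))}

/-- `X` is `k`-identifiable: a general point of `σ_k(X)` has a unique minimal
decomposition. -/
def Identifiable (X : Set (PP K ι)) (k : ℕ) : Prop :=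
  HoldsGenerically (secant k X) fun q => ∃! S : Finset (PP K ι), S ∈ decompositions X q

/-- `α` is the `k`-th secant degree of `X`. -/
def HasSecantDegree (X : Set (PP K ι)) (k α : ℕ) : Prop :=
  HoldsGenerically (secant k X) fun q => (decompositions X q).ncard = α

/-- Projective linear subspaces. -/
def IsProjLinear (L : Set (PP K ι)) : Prop :=
  L = projSpan L

/-- Lines in projective space. -/
def IsLine (L : Set (PP K ι)) : Prop :=
  IsProjLinear L ∧ Module.finrank K (vspan L) = 2

/-- `X` is uniruled by lines: through a general point of `X` there is a line
contained in `X`. -/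
def UniruledByLines (X : Set (PP K ι)) : Prop :=
  HoldsGenerically X fun x => ∃ L : Set (PP K ι), IsLine L ∧ x ∈ L ∧ L ⊆ X

/-- The join of two sets in projective space. -/
def join (A B : Set (PP K ι)) : Set (PP K ι) :=
  zclosure (⋃ a ∈ A, ⋃ b ∈ B, projSpan {a, b})

/-- The linear space `M` is tangent to `X` along `W`. -/
def TangentAlong (M X W : Set (PP K ι)) : Prop :=
  ∀ x ∈ W, IsSmoothPoint X x → embTangentSpace X x ⊆ M

/-- `S` has exactly `m` irreducible components, all of them projective linear
subspaces, and these components are linearly independent. -/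
def ComponentsAreIndepLinear (S : Set (PP K ι)) (m : ℕ) : Prop :=
  ∃ C : Fin m → Set (PP K ι), Function.Injective C ∧
    (∀ D : Set (PP K ι), IsZIrredComponent S D ↔ ∃ i, D = C i) ∧
    (∀ i, IsProjLinear (C i)) ∧
    Module.finrank K (vspan S) = ∑ i, Module.finrank K (vspan (C i))


/-- The Segre variety: the image of `ℙ^{n 1} × ⋯ × ℙ^{n s}` under the Segre
embedding, given by the complete linear system `|O(1,…,1)|`. -/
def segreVariety (K : Type*) [Field K] (s : ℕ) (n : Fin s → ℕ) :
    Set (PP K (∀ i : Fin s, Fin (n i + 1))) :=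
  {x | ∃ u : ∀ i : Fin s, Fin (n i + 1) → K,
    x.submodule = Submodule.span K
      ({fun t => ∏ i, u i (t i)} : Set ((∀ i : Fin s, Fin (n i + 1)) → K))}

/-- The projection of `L ⊆ Segre` to the `i`-th factor is a single point, i.e. `L`
lies in a single fiber of the `i`-th projection. -/
def SegreFactorIsPoint (K : Type*) [Field K] (s : ℕ) (n : Fin s → ℕ) (i : Fin s)
    (L : Set (PP K (∀ j : Fin s, Fin (n j + 1)))) : Prop :=
  ∃ w : Fin (n i + 1) → K, w ≠ 0 ∧ ∀ x ∈ L,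
    ∃ u : ∀ j : Fin s, Fin (n j + 1) → K,
      x.submodule = Submodule.span K
        ({fun t => ∏ j, u j (t j)} : Set ((∀ j : Fin s, Fin (n j + 1)) → K)) ∧
      u i ∈ Submodule.span K ({w} : Set (Fin (n i + 1) → K))

/-- Index type for the Segre–Veronese embedding of multidegree `d`:
multi-indices of degree `d i` in the homogeneous variables of the `i`-th factor. -/
abbrev svIndex (s : ℕ) (n d : Fin s → ℕ) : Type :=
  ∀ i : Fin s, {w : Fin (n i + 1) → Fin (d i + 1) // ∑ j, (w j : ℕ) = d i}

/-- The Segre–Veronese variety of multidegree `d`: the image of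
`ℙ^{n 1} × ⋯ × ℙ^{n s}` under the embedding by `|L_1^{d 1} ⊗ ⋯ ⊗ L_s^{d s}|`. -/
def segreVeroneseVariety (K : Type*) [Field K] (s : ℕ) (n d : Fin s → ℕ) :
    Set (PP K (svIndex s n d)) :=
  {x | ∃ u : ∀ i : Fin s, Fin (n i + 1) → K,
    x.submodule = Submodule.span K
      ({fun t => ∏ i, ∏ j, u i j ^ ((t i).1 j : ℕ)} : Set (svIndex s n d → K))}

/-- The vector of the moments of degree `≤ d` of the one-dimensional Gaussian
distribution with mean `μ` and variance `t`. -/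
def gaussMomentVec (K : Type*) [Field K] (d : ℕ) (μ t : K) : Fin (d + 1) → K := fun i =>
  ∑ j ∈ Finset.range ((i : ℕ) / 2 + 1),
    ((Nat.choose (i : ℕ) (2 * j) * Nat.doubleFactorial (2 * j - 1) : ℕ) : K) *
      t ^ j * μ ^ ((i : ℕ) - 2 * j)

/-- The Gaussian moment variety `𝒢_{1,d} ⊆ ℙ^d`. -/
def gaussianMomentVariety (K : Type*) [Field K] (d : ℕ) : Set (PP K (Fin (d + 1))) :=
  zclosure {x | ∃ μ t : K,
    x.submodule = Submodule.span K ({gaussMomentVec K d μ t} : Set (Fin (d + 1) → K))}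

/-- Zariski-closed families of `m`-tuples of coefficient vectors of linear forms. -/
def IsAffineClosedFamily {m : ℕ} (T : Set (Fin m → ι → K)) : Prop :=
  ∃ S : Set (MvPolynomial (Fin m × ι) K),
    T = {h | ∀ f ∈ S, MvPolynomial.eval (fun p => h p.1 p.2) f = 0}

/-- The linear subspace cut out by the `m` linear forms with coefficient vectors `h`. -/
def linearSlice {m : ℕ} (h : Fin m → ι → K) : Set (PP K ι) :=
  {x | ∀ j : Fin m, ∑ i : ι, h j i * x.rep i = 0}

/-- `x` lies on the hyperplane with coefficient vector `f`. -/
def inHyperplane (f : ι → K) (x : PP K ι) : Prop :=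
  ∑ i : ι, f i * x.rep i = 0

/-- `X ⊆ ℙ^r` (of dimension `n`, `r + 1 = card ι`) is very strange: for a general
codimension-`n` linear subspace `M`, some `r - n + 2` points of `X ∩ M` lie in a
hyperplane of `M`, i.e. in a linear subspace of projective dimension `r - n - 1`. -/
def VeryStrange (n : ℕ) (X : Set (PP K ι)) : Prop :=
  ∃ T : Set (Fin n → ι → K), IsAffineClosedFamily T ∧ (∃ h, h ∉ T) ∧
    ∀ h : Fin n → ι → K, h ∉ T →
      ∃ A : Finset (PP K ι), ↑A ⊆ X ∩ linearSlice h ∧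
        A.card = Fintype.card ι + 1 - n ∧
        Module.finrank K (vspan (A : Set (PP K ι))) ≤ Fintype.card ι - 1 - n


open Finset

/-- Closed-form Gaussian moment with a uniform summation range. -/
def Mnat (μ t : K) (n : ℕ) : K :=
  ∑ j ∈ Finset.range (n + 1),
    ((Nat.choose n (2 * j) * Nat.doubleFactorial (2 * j - 1) : ℕ) : K) * t ^ j * μ ^ (n - 2 * j)

lemma choose_df_rec (n m : ℕ) :
    Nat.choose (n+2) (2*(m+1)) * Nat.doubleFactorial (2*(m+1) - 1)
      = Nat.choose (n+1) (2*(m+1)) * Nat.doubleFactorial (2*(m+1) - 1)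
        + (n+1) * (Nat.choose n (2*m) * Nat.doubleFactorial (2*m - 1)) := by
  have h2 : 2*(m+1) - 1 = 2*m+1 := by omega
  have hpascal : Nat.choose (n+2) (2*(m+1)) = Nat.choose (n+1) (2*m+1) + Nat.choose (n+1) (2*(m+1)) := by
    have : 2*(m+1) = (2*m+1) + 1 := by ring
    rw [this]
    exact Nat.choose_succ_succ (n+1) (2*m+1)
  have hdf : Nat.doubleFactorial (2*m+1) = (2*m+1) * Nat.doubleFactorial (2*m-1) :=
    Nat.doubleFactorial_add_one (2*m)
  have hkey : Nat.choose (n+1) (2*m+1) * ((2*m+1) * Nat.doubleFactorial (2*m-1))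
      = (n+1) * (Nat.choose n (2*m) * Nat.doubleFactorial (2*m-1)) := by
    have := Nat.add_one_mul_choose_eq n (2*m)
    -- succ n * choose n k = choose (succ n) (succ k) * succ k
    calc Nat.choose (n+1) (2*m+1) * ((2*m+1) * Nat.doubleFactorial (2*m-1))
        = (Nat.choose (n+1) (2*m+1) * (2*m+1)) * Nat.doubleFactorial (2*m-1) := by ring
      _ = ((n+1) * Nat.choose n (2*m)) * Nat.doubleFactorial (2*m-1) := by
          rw [← this]
      _ = (n+1) * (Nat.choose n (2*m) * Nat.doubleFactorial (2*m-1)) := by ring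
  rw [h2, hpascal, hdf] at *
  rw [Nat.add_mul, hkey]
  ring

lemma Mnat_rec (μ t : K) (n : ℕ) :
    Mnat μ t (n+2) = μ * Mnat μ t (n+1) + ((n : K) + 1) * t * Mnat μ t n := by
  unfold Mnat
  -- second summand on RHS
  have hB : ((n : K) + 1) * t * ∑ j ∈ range (n + 1),
        ((Nat.choose n (2*j) * Nat.doubleFactorial (2*j - 1) : ℕ) : K) * t ^ j * μ ^ (n - 2*j)
      = ∑ j ∈ range (n + 3),
        (if j = 0 then 0 else
          (((n+1) * (Nat.choose n (2*(j-1)) * Nat.doubleFactorial (2*(j-1) - 1)) : ℕ) : K)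
            * t ^ j * μ ^ (n + 2 - 2*j)) := by
    rw [Finset.sum_range_succ' (fun j => (if j = 0 then 0 else
          (((n+1) * (Nat.choose n (2*(j-1)) * Nat.doubleFactorial (2*(j-1) - 1)) : ℕ) : K)
            * t ^ j * μ ^ (n + 2 - 2*j))) (n+2)]
    simp only [Nat.succ_ne_zero, if_false, Nat.add_sub_cancel, if_true, add_zero, reduceIte]
    rw [Finset.sum_range_succ (fun x => (((n + 1) * (Nat.choose n (2 * x) * Nat.doubleFactorial (2 * x - 1)) : ℕ) : K) * t ^ (x + 1) * μ ^ (n + 2 - 2 * (x + 1))) (n+1)]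
    have hlast : Nat.choose n (2*(n+1)) = 0 := Nat.choose_eq_zero_of_lt (by omega)
    rw [Finset.mul_sum]
    simp only [hlast, Nat.zero_mul, Nat.mul_zero, Nat.cast_zero, zero_mul, mul_zero, add_zero]
    refine Finset.sum_congr rfl ?_
    intro j hj
    rw [Finset.mem_range] at hj
    by_cases hc : Nat.choose n (2*j) = 0
    · simp [hc]
    · have h2j : 2*j <= n := by
        by_contra hlt
        exact hc (Nat.choose_eq_zero_of_lt (by omega))
      have hexp : n + 2 - 2*(j+1) = n - 2*j := by omega
      rw [hexp]
      push_cast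
      ring
  have hA : μ * ∑ j ∈ range (n + 2),
        ((Nat.choose (n+1) (2*j) * Nat.doubleFactorial (2*j - 1) : ℕ) : K) * t ^ j * μ ^ (n + 1 - 2*j)
      = ∑ j ∈ range (n + 3),
        ((Nat.choose (n+1) (2*j) * Nat.doubleFactorial (2*j - 1) : ℕ) : K) * t ^ j * μ ^ (n + 2 - 2*j) := by
    rw [Finset.sum_range_succ (fun j => ((Nat.choose (n+1) (2*j) * Nat.doubleFactorial (2*j - 1) : ℕ) : K) * t ^ j * μ ^ (n + 2 - 2*j)) (n+2)]
    have hlast : Nat.choose (n+1) (2*(n+2)) = 0 := Nat.choose_eq_zero_of_lt (by omega)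
    rw [Finset.mul_sum]
    simp only [hlast, Nat.zero_mul, Nat.mul_zero, Nat.cast_zero, zero_mul, mul_zero, add_zero]
    refine Finset.sum_congr rfl ?_
    intro j hj
    rw [Finset.mem_range] at hj
    by_cases hc : Nat.choose (n+1) (2*j) = 0
    · simp [hc]
    · have h2j : 2*j <= n + 1 := by
        by_contra hlt
        exact hc (Nat.choose_eq_zero_of_lt (by omega))
      have hexp : n + 2 - 2*j = (n + 1 - 2*j) + 1 := by omega
      rw [hexp, pow_succ]
      ring
  rw [hA, hB, ← Finset.sum_add_distrib]
  refine Finset.sum_congr rfl ?_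
  intro j hj
  cases j with
  | zero => simp
  | succ m =>
    simp only [Nat.succ_ne_zero, if_false, Nat.add_sub_cancel, reduceIte]
    rw [choose_df_rec n m]
    push_cast
    ring

lemma gaussMomentVec_eq (d : ℕ) (μ t : K) (i : Fin (d+1)) :
    gaussMomentVec K d μ t i = Mnat μ t i := by
  unfold gaussMomentVec Mnat
  refine Finset.sum_subset ?_ ?_
  · intro j hj
    rw [Finset.mem_range] at hj ⊢
    omega
  · intro j hj hj2
    rw [Finset.mem_range] at hj hj2
    have : Nat.choose (i : ℕ) (2*j) = 0 := Nat.choose_eq_zero_of_lt (by omega)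
    simp [this]

lemma Mnat_zero (μ t : K) : Mnat μ t 0 = 1 := by
  simp [Mnat]

lemma Mnat_one (μ t : K) : Mnat μ t 1 = μ := by
  simp [Mnat, Finset.sum_range_succ]

lemma Mnat_two (μ t : K) : Mnat μ t 2 = μ^2 + t := by
  have : Nat.choose 2 4 = 0 := by decide
  simp [Mnat, Finset.sum_range_succ, Nat.doubleFactorial, this]

lemma gaussMomentVec_rec (d : ℕ) (μ t : K) (n : ℕ) (h : n + 2 ≤ d) :
    gaussMomentVec K d μ t ⟨n+2, by omega⟩
      = μ * gaussMomentVec K d μ t ⟨n+1, by omega⟩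
        + ((n : K) + 1) * t * gaussMomentVec K d μ t ⟨n, by omega⟩ := by
  rw [gaussMomentVec_eq, gaussMomentVec_eq, gaussMomentVec_eq]
  exact Mnat_rec μ t n

lemma gaussMomentVec_zero (d : ℕ) (μ t : K) (h : 0 < d + 1) :
    gaussMomentVec K d μ t ⟨0, h⟩ = 1 := by
  rw [gaussMomentVec_eq]; exact Mnat_zero μ t

lemma gaussMomentVec_one (d : ℕ) (μ t : K) (h : 1 < d + 1) :
    gaussMomentVec K d μ t ⟨1, h⟩ = μ := by
  rw [gaussMomentVec_eq]; exact Mnat_one μ t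

lemma gaussMomentVec_two (d : ℕ) (μ t : K) (h : 2 < d + 1) :
    gaussMomentVec K d μ t ⟨2, h⟩ = μ ^ 2 + t := by
  rw [gaussMomentVec_eq]; exact Mnat_two μ t

/-- The basic cubic relations that hold on the Gaussian moment variety. -/
def cubicRel (K : Type*) [Field K] (d n : ℕ) (h : n + 2 ≤ d) : MvPolynomial (Fin (d+1)) K :=
  MvPolynomial.X ⟨0, by omega⟩ * MvPolynomial.X ⟨0, by omega⟩ * MvPolynomial.X ⟨n+2, by omega⟩
    - MvPolynomial.X ⟨0, by omega⟩ * MvPolynomial.X ⟨1, by omega⟩ * MvPolynomial.X ⟨n+1, by omega⟩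
    - MvPolynomial.C ((n : K) + 1) *
        ((MvPolynomial.X ⟨0, by omega⟩ * MvPolynomial.X ⟨2, by omega⟩
            - MvPolynomial.X ⟨1, by omega⟩ * MvPolynomial.X ⟨1, by omega⟩)
          * MvPolynomial.X ⟨n, by omega⟩)

lemma cubicRel_homogeneous (d n : ℕ) (h : n + 2 ≤ d) :
    (cubicRel K d n h).IsHomogeneous 3 := by
  unfold cubicRel
  refine MvPolynomial.IsHomogeneous.sub (MvPolynomial.IsHomogeneous.sub ?_ ?_) ?_
  · exact ((MvPolynomial.isHomogeneous_X K _).mul (MvPolynomial.isHomogeneous_X K _)).mul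
      (MvPolynomial.isHomogeneous_X K _)
  · exact ((MvPolynomial.isHomogeneous_X K _).mul (MvPolynomial.isHomogeneous_X K _)).mul
      (MvPolynomial.isHomogeneous_X K _)
  · have h3 := (MvPolynomial.isHomogeneous_C (Fin (d+1)) ((n : K) + 1)).mul
      ((((MvPolynomial.isHomogeneous_X K (⟨0, by omega⟩ : Fin (d+1))).mul
          (MvPolynomial.isHomogeneous_X K (⟨2, by omega⟩ : Fin (d+1)))).sub
        ((MvPolynomial.isHomogeneous_X K (⟨1, by omega⟩ : Fin (d+1))).mul
          (MvPolynomial.isHomogeneous_X K (⟨1, by omega⟩ : Fin (d+1))))).mul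
        (MvPolynomial.isHomogeneous_X K (⟨n, by omega⟩ : Fin (d+1))))
    simpa using h3

lemma cubicRel_eval (d n : ℕ) (h : n + 2 ≤ d) (v : Fin (d+1) → K) :
    MvPolynomial.eval v (cubicRel K d n h)
      = v ⟨0, by omega⟩ * v ⟨0, by omega⟩ * v ⟨n+2, by omega⟩
        - v ⟨0, by omega⟩ * v ⟨1, by omega⟩ * v ⟨n+1, by omega⟩
        - ((n : K) + 1) * ((v ⟨0, by omega⟩ * v ⟨2, by omega⟩ - v ⟨1, by omega⟩ * v ⟨1, by omega⟩)
            * v ⟨n, by omega⟩) := by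
  simp [cubicRel]

lemma subset_zclosure (S : Set (PP K ι)) : S ⊆ zclosure S := by
  intro x hx
  exact Set.mem_sInter.mpr fun Y hY => hY.2 hx

lemma zclosure_le {S Y : Set (PP K ι)} (h1 : IsZClosed Y) (h2 : S ⊆ Y) : zclosure S ⊆ Y :=
  Set.sInter_subset_of_mem ⟨h1, h2⟩

/-- **Example (r+1).**  For every `d ≥ 4`, the Gaussian moment surface
`𝒢_{1,d} ⊆ ℙ^d` is not uniruled by lines. -/
theorem statement16 {K : Type*} [Field K] [IsAlgClosed K] [CharZero K]
    (d : ℕ) (hd : 4 ≤ d) :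
    ¬UniruledByLines (gaussianMomentVariety K d) := by
  rintro ⟨Y, hYc, hXY, hgen⟩
  classical
  -- the set of cubic relations
  have hSZ : IsZClosed (zeroLocus {f | ∃ n : ℕ, ∃ hn : n + 2 ≤ d, f = cubicRel K d n hn}) := by
    refine ⟨_, ?_, rfl⟩
    rintro f ⟨n, hn, rfl⟩
    exact ⟨3, cubicRel_homogeneous d n hn⟩
  have hPZ : {x : PP K (Fin (d+1)) | ∃ μ t : K,
      x.submodule = Submodule.span K ({gaussMomentVec K d μ t} : Set (Fin (d + 1) → K))}
      ⊆ zeroLocus {f | ∃ n : ℕ, ∃ hn : n + 2 ≤ d, f = cubicRel K d n hn} := by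
    rintro x ⟨μ, t, hx⟩ f ⟨n, hn, rfl⟩ v hv
    rw [hx, Submodule.mem_span_singleton] at hv
    obtain ⟨a, rfl⟩ := hv
    rw [cubicRel_eval]
    have h0 := gaussMomentVec_zero d μ t (by omega)
    have h1 := gaussMomentVec_one d μ t (by omega)
    have h2 := gaussMomentVec_two d μ t (by omega)
    have hrec := gaussMomentVec_rec d μ t n hn
    simp only [Pi.smul_apply, smul_eq_mul]
    rw [h0, h1, h2]
    linear_combination (a ^ 3 : K) * hrec
  have hXZ : gaussianMomentVariety K d
      ⊆ zeroLocus {f | ∃ n : ℕ, ∃ hn : n + 2 ≤ d, f = cubicRel K d n hn} :=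
    zclosure_le hSZ hPZ
  -- find a parametrized point off `Y`
  have hPnotY : ¬ ({x : PP K (Fin (d+1)) | ∃ μ t : K,
      x.submodule = Submodule.span K ({gaussMomentVec K d μ t} : Set (Fin (d + 1) → K))} ⊆ Y) :=
    fun hsub => hXY (zclosure_le hYc hsub)
  obtain ⟨x, hxP, hxY⟩ := Set.not_subset.1 hPnotY
  obtain ⟨μ, t, hxsub⟩ := id hxP
  have hxX : x ∈ gaussianMomentVariety K d := subset_zclosure _ hxP
  obtain ⟨L, ⟨hLproj, hLrank⟩, hxL, hLX⟩ := hgen x ⟨hxX, hxY⟩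
  have hg0 : gaussMomentVec K d μ t ⟨0, by omega⟩ = 1 := gaussMomentVec_zero d μ t (by omega)
  have hgW : gaussMomentVec K d μ t ∈ vspan L := by
    have hx2 : x ∈ projSpan L := by rw [← hLproj]; exact hxL
    exact hx2 (by rw [hxsub]; exact Submodule.mem_span_singleton_self _)
  have hgne : gaussMomentVec K d μ t ≠ 0 := by
    intro h
    rw [h] at hg0
    simp at hg0
  have hnotle : ¬(vspan L ≤ K ∙ gaussMomentVec K d μ t) := by
    intro hle
    have h1 := Submodule.finrank_mono hle
    rw [hLrank, finrank_span_singleton hgne] at h1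
    omega
  obtain ⟨w, hwW, hwg⟩ := SetLike.not_le_iff_exists.1 hnotle
  set b : Fin (d+1) → K := w - w ⟨0, by omega⟩ • gaussMomentVec K d μ t with hbdef
  have hbW : b ∈ vspan L := (vspan L).sub_mem hwW ((vspan L).smul_mem _ hgW)
  have hbne : b ≠ 0 := by
    intro h
    apply hwg
    have hw : w = w ⟨0, by omega⟩ • gaussMomentVec K d μ t := by
      have := sub_eq_zero.mp (hbdef ▸ h)
      exact this
    rw [hw]
    exact Submodule.smul_mem _ _ (Submodule.mem_span_singleton_self _)
  have hb0 : b ⟨0, by omega⟩ = 0 := by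
    rw [hbdef]
    simp only [Pi.sub_apply, Pi.smul_apply, smul_eq_mul]
    rw [hg0]
    ring
  set A : ℕ → K := fun i => if h : i < d + 1 then gaussMomentVec K d μ t ⟨i, h⟩ else 0 with hAdef
  set B : ℕ → K := fun i => if h : i < d + 1 then b ⟨i, h⟩ else 0 with hBdef
  have hB0 : B 0 = 0 := by
    rw [hBdef]
    simp only [dif_pos (show (0:ℕ) < d + 1 by omega)]
    exact hb0
  have hE : ∀ n : ℕ, n + 2 ≤ d → ∀ s : K,
      (A (n+2) + s * B (n+2)) - (A 1 + s * B 1) * (A (n+1) + s * B (n+1))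
        - ((n : K) + 1) * ((A 2 + s * B 2) - (A 1 + s * B 1) * (A 1 + s * B 1))
            * (A n + s * B n) = 0 := by
    intro n hn s
    set u : Fin (d+1) → K := gaussMomentVec K d μ t + s • b with hudef
    have huW : u ∈ vspan L := (vspan L).add_mem hgW ((vspan L).smul_mem s hbW)
    have hu0 : u ⟨0, by omega⟩ = 1 := by
      rw [hudef]
      simp only [Pi.add_apply, Pi.smul_apply, smul_eq_mul]
      rw [hg0, hb0]
      ring
    have hune : u ≠ 0 := by
      intro h
      rw [h] at hu0
      simp at hu0
    have hyL : Projectivization.mk K u hune ∈ L := by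
      rw [hLproj]
      show (Projectivization.mk K u hune).submodule ≤ vspan L
      rw [Projectivization.submodule_mk]
      exact (Submodule.span_singleton_le_iff_mem u _).mpr huW
    have hmem : u ∈ (Projectivization.mk K u hune).submodule := by
      rw [Projectivization.submodule_mk]
      exact Submodule.mem_span_singleton_self u
    have heq := hXZ (hLX hyL) (cubicRel K d n hn) ⟨n, hn, rfl⟩ u hmem
    rw [cubicRel_eval] at heq
    have key : ∀ (i : ℕ) (hi : i < d + 1), A i + s * B i = u ⟨i, hi⟩ := by
      intro i hi
      rw [hAdef, hBdef, hudef]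
      simp only [dif_pos hi, Pi.add_apply, Pi.smul_apply, smul_eq_mul]
    rw [key (n+2) (by omega), key 1 (by omega), key (n+1) (by omega),
        key 2 (by omega), key n (by omega)]
    rw [hu0] at heq
    linear_combination heq
  have hB1 : B 1 = 0 := by
    have e0 := hE 1 (by omega) 0
    have e1 := hE 1 (by omega) 1
    have e2 := hE 1 (by omega) 2
    have e3 := hE 1 (by omega) 3
    have h3 : B 1 ^ 3 = 0 := by
      linear_combination (1/12 : K) * e3 - (1/4 : K) * e2 + (1/4 : K) * e1 - (1/12 : K) * e0
    exact (pow_eq_zero_iff (by norm_num : (3:ℕ) ≠ 0)).mp h3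
  have hB2 : B 2 = 0 := by
    have e0 := hE 2 (by omega) 0
    have e1 := hE 2 (by omega) 1
    have e2 := hE 2 (by omega) 2
    simp only [hB1, mul_zero, add_zero] at e0 e1 e2
    have h2 : B 2 ^ 2 = 0 := by
      linear_combination (-1/6 : K) * e2 + (1/3 : K) * e1 - (1/6 : K) * e0
    exact (pow_eq_zero_iff (by norm_num : (2:ℕ) ≠ 0)).mp h2
  have hBall : ∀ i : ℕ, 1 ≤ i → i ≤ d → B i = 0 := by
    intro i
    induction i using Nat.strong_induction_on with
    | _ i ih =>
      intro hi1 hid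
      rcases (show i = 1 ∨ i = 2 ∨ 3 ≤ i by omega) with rfl | rfl | h3
      · exact hB1
      · exact hB2
      · obtain ⟨n, rfl⟩ : ∃ n, i = n + 2 := ⟨i - 2, by omega⟩
        have hn : n + 2 ≤ d := hid
        have e0 := hE n hn 0
        have e1 := hE n hn 1
        have hBn : B n = 0 := ih n (by omega) (by omega) (by omega)
        have hBn1 : B (n+1) = 0 := ih (n+1) (by omega) (by omega) (by omega)
        simp only [hB1, hB2, hBn, hBn1, mul_zero, add_zero] at e0 e1
        linear_combination e1 - e0
  apply hbne
  funext i
  have hBi : B (i : ℕ) = b i := by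
    rw [hBdef]
    simp only [dif_pos i.isLt, Fin.eta]
  have hiz : B (i : ℕ) = 0 := by
    rcases Nat.eq_zero_or_pos (i : ℕ) with h0' | h0'
    · rw [h0']
      exact hB0
    · exact hBall _ h0' (by omega)
  rw [← hBi] at *
  simp only [Pi.zero_apply]
  exact hiz

end ContactLoci
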